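/- For an odd prime p, (sum_{i=0}^{p-1} p*(-1)^i/(2i-1))^2 ≡ 1 + 4p*(-1)^((p-1)/2) + 4p^2 - p^2 * sum_{k=1}^{(p-3)/2} (-1)^k/k^2 (mod p^3). -/

import Mathlib

open Finset

lemma aux_norm_sum_le_one {p : ℕ} [Fact p.Prime] {ι : Type*} (s : Finset ι) (f : ι → ℚ_[p])
    (h : ∀ i ∈ s, ‖f i‖ ≤ 1) : ‖∑ i ∈ s, f i‖ ≤ 1 := by
  refine Finset.sum_induction f (fun x => ‖x‖ ≤ 1) (fun a b ha hb => ?_) (by simp) h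
  exact le_trans (Padic.nonarchimedean a b) (max_le ha hb)

lemma aux_norm_mul_le_one {p : ℕ} [Fact p.Prime] {a b : ℚ_[p]} (ha : ‖a‖ ≤ 1) (hb : ‖b‖ ≤ 1) :
    ‖a * b‖ ≤ 1 := by
  rw [norm_mul]
  exact mul_le_one₀ ha (norm_nonneg _) hb

lemma aux_norm_add_le_one {p : ℕ} [Fact p.Prime] {a b : ℚ_[p]} (ha : ‖a‖ ≤ 1) (hb : ‖b‖ ≤ 1) :
    ‖a + b‖ ≤ 1 := le_trans (Padic.nonarchimedean a b) (max_le ha hb)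

lemma aux_norm_sub_le_one {p : ℕ} [Fact p.Prime] {a b : ℚ_[p]} (ha : ‖a‖ ≤ 1) (hb : ‖b‖ ≤ 1) :
    ‖a - b‖ ≤ 1 := by
  rw [sub_eq_add_neg]
  exact aux_norm_add_le_one ha (by rwa [norm_neg])

lemma aux_norm_nat_one {p : ℕ} [Fact p.Prime] {u : ℕ} (h : ¬ p ∣ u) :
    ‖(u : ℚ_[p])‖ = 1 := by
  have h1 : ‖((u : ℤ) : ℚ_[p])‖ ≤ 1 := Padic.norm_int_le_one _
  have h2 : ¬ ‖((u : ℤ) : ℚ_[p])‖ < 1 := by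
    rw [Padic.norm_intCast_lt_one_iff]
    exact_mod_cast h
  push_cast at h1 h2 ⊢
  linarith [lt_or_eq_of_le h1]

lemma aux_norm_nat_le_one {p : ℕ} [Fact p.Prime] (u : ℕ) : ‖(u : ℚ_[p])‖ ≤ 1 := by
  have h1 : ‖((u : ℤ) : ℚ_[p])‖ ≤ 1 := Padic.norm_int_le_one _
  push_cast at h1 ⊢
  exact h1

lemma aux_not_dvd_of_lt {p d : ℕ} (h0 : 0 < d) (h1 : d < p) : ¬ p ∣ d :=
  fun hd => absurd (Nat.le_of_dvd h0 hd) (not_le.mpr h1)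

lemma aux_not_dvd_of_between {p d : ℕ} (h0 : p < d) (h1 : d < 2 * p) : ¬ p ∣ d := by
  intro hd
  have h2 : p ∣ d - p := Nat.dvd_sub hd dvd_rfl
  exact aux_not_dvd_of_lt (by omega) (by omega) h2

lemma aux_neg_one_pow_sub {K : Type*} [Field K] (a b : ℕ) (h : b ≤ a) :
    (-1 : K) ^ (a - b) = (-1) ^ a * (-1) ^ b := by
  conv_rhs => rw [← Nat.sub_add_cancel h, pow_add]
  rw [mul_assoc, ← mul_pow]
  norm_num

set_option maxHeartbeats 2000000 in
lemma key_padic (p n : ℕ) [hfp : Fact p.Prime] (hpn : p = 2 * n + 1) (hn1 : 1 ≤ n) :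
    ∃ c : ℚ_[p], ‖c‖ ≤ 1 ∧
      (∑ i ∈ range p, (p : ℚ_[p]) * (-1) ^ i / (2 * (i : ℚ_[p]) - 1)) ^ 2 -
        (1 + 4 * (p : ℚ_[p]) * (-1) ^ n + 4 * (p : ℚ_[p]) ^ 2 -
          (p : ℚ_[p]) ^ 2 * ∑ k ∈ Icc 1 (n - 1), (-1 : ℚ_[p]) ^ k / (k : ℚ_[p]) ^ 2)
      = (p : ℚ_[p]) ^ 3 * c := by
  have hp0 : (p : ℚ_[p]) ≠ 0 := Nat.cast_ne_zero.mpr hfp.out.ne_zero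
  set P : ℚ_[p] := (p : ℚ_[p]) with hP
  have hpc : P = 2 * (n : ℚ_[p]) + 1 := by
    have h := congrArg (fun m : ℕ => (m : ℚ_[p])) hpn
    simpa using h
  set A : ℚ_[p] := ∑ j ∈ Icc 2 n, (-1 : ℚ_[p]) ^ j / (2 * (j : ℚ_[p]) - 1) ^ 2 with hA
  set W : ℚ_[p] := ∑ j ∈ Icc 2 n,
      (-1 : ℚ_[p]) ^ j / ((2 * (j : ℚ_[p]) - 1) ^ 2 * (2 * P - (2 * (j : ℚ_[p]) - 1))) with hW
  set V : ℚ_[p] := ∑ k ∈ Icc 1 (n - 1),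
      (-1 : ℚ_[p]) ^ k * (P - 4 * (k : ℚ_[p])) / ((k : ℚ_[p]) ^ 2 * (P - 2 * (k : ℚ_[p])) ^ 2) with hV
  -- basic facts
  have hu_cast : ∀ j ∈ Icc 2 n, (2 * (j : ℚ_[p]) - 1) = ((2 * j - 1 : ℕ) : ℚ_[p]) := by
    intro j hj
    rw [mem_Icc] at hj
    rw [Nat.cast_sub (by omega)]
    push_cast; ring
  have hu_norm : ∀ j ∈ Icc 2 n, ‖(2 * (j : ℚ_[p]) - 1)‖ = 1 := by
    intro j hj
    rw [hu_cast j hj]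
    rw [mem_Icc] at hj
    exact aux_norm_nat_one (aux_not_dvd_of_lt (by omega) (by omega))
  have hu_ne : ∀ j ∈ Icc 2 n, (2 * (j : ℚ_[p]) - 1) ≠ 0 := by
    intro j hj h
    have := hu_norm j hj
    rw [h] at this; simp at this
  have hv_cast : ∀ j ∈ Icc 2 n,
      (2 * P - (2 * (j : ℚ_[p]) - 1)) = ((2 * p - (2 * j - 1) : ℕ) : ℚ_[p]) := by
    intro j hj
    rw [mem_Icc] at hj
    rw [Nat.cast_sub (by omega), Nat.cast_sub (by omega), hP]
    push_cast; ring
  have hv_norm : ∀ j ∈ Icc 2 n, ‖(2 * P - (2 * (j : ℚ_[p]) - 1))‖ = 1 := by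
    intro j hj
    rw [hv_cast j hj]
    rw [mem_Icc] at hj
    exact aux_norm_nat_one (aux_not_dvd_of_between (by omega) (by omega))
  have hv_ne : ∀ j ∈ Icc 2 n, (2 * P - (2 * (j : ℚ_[p]) - 1)) ≠ 0 := by
    intro j hj h
    have := hv_norm j hj
    rw [h] at this; simp at this
  have hk_norm : ∀ k ∈ Icc 1 (n - 1), ‖(k : ℚ_[p])‖ = 1 := by
    intro k hk
    rw [mem_Icc] at hk
    exact aux_norm_nat_one (aux_not_dvd_of_lt (by omega) (by omega))
  have hk_ne : ∀ k ∈ Icc 1 (n - 1), (k : ℚ_[p]) ≠ 0 := by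
    intro k hk h
    have := hk_norm k hk
    rw [h] at this; simp at this
  have hw_cast : ∀ k ∈ Icc 1 (n - 1), (P - 2 * (k : ℚ_[p])) = ((p - 2 * k : ℕ) : ℚ_[p]) := by
    intro k hk
    rw [mem_Icc] at hk
    rw [Nat.cast_sub (by omega), hP]
    push_cast; ring
  have hw_norm : ∀ k ∈ Icc 1 (n - 1), ‖(P - 2 * (k : ℚ_[p]))‖ = 1 := by
    intro k hk
    rw [hw_cast k hk]
    rw [mem_Icc] at hk
    exact aux_norm_nat_one (aux_not_dvd_of_lt (by omega) (by omega))
  have hw_ne : ∀ k ∈ Icc 1 (n - 1), (P - 2 * (k : ℚ_[p])) ≠ 0 := by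
    intro k hk h
    have := hw_norm k hk
    rw [h] at this; simp at this
  have hnegone : ∀ j : ℕ, ‖(-1 : ℚ_[p]) ^ j‖ = 1 := by
    intro j; rw [norm_pow, norm_neg, norm_one, one_pow]
  -- norm bounds
  have hAnorm : ‖A‖ ≤ 1 := by
    refine aux_norm_sum_le_one _ _ (fun j hj => ?_)
    rw [norm_div, hnegone, norm_pow, hu_norm j hj]; norm_num
  have hWnorm : ‖W‖ ≤ 1 := by
    refine aux_norm_sum_le_one _ _ (fun j hj => ?_)
    have hden : ‖(2 * (j : ℚ_[p]) - 1) ^ 2 * (2 * P - (2 * (j : ℚ_[p]) - 1))‖ = 1 := by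
      rw [norm_mul, norm_pow, hu_norm j hj, hv_norm j hj]; norm_num
    rw [norm_div, hnegone, hden]; norm_num
  have hVnorm : ‖V‖ ≤ 1 := by
    refine aux_norm_sum_le_one _ _ (fun k hk => ?_)
    have hden : ‖(k : ℚ_[p]) ^ 2 * (P - 2 * (k : ℚ_[p])) ^ 2‖ = 1 := by
      rw [norm_mul, norm_pow, norm_pow, hk_norm k hk, hw_norm k hk]; norm_num
    rw [norm_div, hden, div_one]
    have h4 : ‖(P - 4 * (k : ℚ_[p]))‖ ≤ 1 := by
      have heq : (P - 4 * (k : ℚ_[p])) = (((p : ℤ) - 4 * k : ℤ) : ℚ_[p]) := by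
        rw [hP]; push_cast; ring
      rw [heq]
      exact Padic.norm_int_le_one _
    exact aux_norm_mul_le_one (le_of_eq (hnegone k)) h4
  have hPnorm : ‖P‖ ≤ 1 := by rw [hP]; exact aux_norm_nat_le_one p
  have hεnorm : ‖(-1 : ℚ_[p]) ^ n‖ ≤ 1 := le_of_eq (hnegone n)
  -- Step 1 : the main sum
  have hS : (∑ i ∈ range p, P * (-1) ^ i / (2 * (i : ℚ_[p]) - 1))
      = (-(-1 : ℚ_[p]) ^ n - 2 * P - 2 * P ^ 2 * A) + 4 * P ^ 3 * W := by
    have hm : n + 1 ∈ range p := by rw [mem_range]; omega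
    rw [← Finset.add_sum_erase _ _ hm]
    have h2 : (2 * ((n + 1 : ℕ) : ℚ_[p]) - 1) = P := by
      rw [hpc]; push_cast; ring
    have hterm : P * (-1 : ℚ_[p]) ^ (n + 1) / (2 * ((n + 1 : ℕ) : ℚ_[p]) - 1)
        = -(-1 : ℚ_[p]) ^ n := by
      rw [h2, mul_comm, mul_div_assoc, div_self hp0, mul_one, pow_succ]; ring
    rw [hterm]
    have hdecomp : (range p).erase (n + 1) = (range 2 ∪ Icc 2 n) ∪ Icc (n + 2) (2 * n) := by
      ext i
      simp only [mem_erase, mem_range, mem_union, mem_Icc, hpn]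
      omega
    have hdisj1 : Disjoint (range 2) (Icc 2 n) := by
      rw [Finset.disjoint_left]; intro a ha hb
      rw [mem_range] at ha; rw [mem_Icc] at hb; omega
    have hdisj2 : Disjoint (range 2 ∪ Icc 2 n) (Icc (n + 2) (2 * n)) := by
      rw [Finset.disjoint_left]; intro a ha hb
      rw [mem_union, mem_range, mem_Icc] at ha; rw [mem_Icc] at hb; omega
    rw [hdecomp, Finset.sum_union hdisj2, Finset.sum_union hdisj1]
    have hsum2 : ∑ i ∈ range 2, P * (-1 : ℚ_[p]) ^ i / (2 * (i : ℚ_[p]) - 1) = -2 * P := by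
      rw [Finset.sum_range_succ, Finset.sum_range_one]
      norm_num
      ring
    have hrefl : ∑ i ∈ Icc (n + 2) (2 * n), P * (-1 : ℚ_[p]) ^ i / (2 * (i : ℚ_[p]) - 1)
        = ∑ j ∈ Icc 2 n, P * (-1 : ℚ_[p]) ^ (2 * n + 2 - j)
            / (2 * ((2 * n + 2 - j : ℕ) : ℚ_[p]) - 1) := by
      refine Finset.sum_nbij' (fun i => 2 * n + 2 - i) (fun j => 2 * n + 2 - j) ?_ ?_ ?_ ?_ ?_
      · intro a ha; simp only [mem_Icc] at *; omega
      · intro a ha; simp only [mem_Icc] at *; omega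
      · intro a ha; simp only [mem_Icc] at ha; beta_reduce; omega
      · intro a ha; simp only [mem_Icc] at ha; beta_reduce; omega
      · intro a ha; simp only [mem_Icc] at ha
        have h1 : 2 * n + 2 - (2 * n + 2 - a) = a := by omega
        beta_reduce
        rw [h1]
    rw [hsum2, hrefl]
    have hpairs : (∑ j ∈ Icc 2 n, P * (-1 : ℚ_[p]) ^ j / (2 * (j : ℚ_[p]) - 1))
        + (∑ j ∈ Icc 2 n, P * (-1 : ℚ_[p]) ^ (2 * n + 2 - j)
            / (2 * ((2 * n + 2 - j : ℕ) : ℚ_[p]) - 1))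
        = -2 * P ^ 2 * A + 4 * P ^ 3 * W := by
      rw [hA, hW, Finset.mul_sum, Finset.mul_sum, ← Finset.sum_add_distrib,
        ← Finset.sum_add_distrib]
      refine Finset.sum_congr rfl (fun j hj => ?_)
      have hjm := hj
      rw [mem_Icc] at hjm
      have hcast2 : (2 * ((2 * n + 2 - j : ℕ) : ℚ_[p]) - 1)
          = 2 * P - (2 * (j : ℚ_[p]) - 1) := by
        rw [Nat.cast_sub (by omega), hpc]; push_cast; ring
      have hsign : (-1 : ℚ_[p]) ^ (2 * n + 2 - j) = (-1) ^ j := by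
        rw [aux_neg_one_pow_sub _ _ (by omega)]
        have he : (-1 : ℚ_[p]) ^ (2 * n + 2) = 1 := Even.neg_one_pow ⟨n + 1, by ring⟩
        rw [he, one_mul]
      rw [hcast2, hsign]
      have hu := hu_ne j hj
      have hv := hv_ne j hj
      rw [div_add_div _ _ hu hv, mul_div_assoc', mul_div_assoc',
        div_add_div _ _ (pow_ne_zero 2 hu) (mul_ne_zero (pow_ne_zero 2 hu) hv),
        div_eq_div_iff (mul_ne_zero hu hv)
          (mul_ne_zero (pow_ne_zero 2 hu) (mul_ne_zero (pow_ne_zero 2 hu) hv))]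
      ring
    linear_combination hpairs
  -- Step 2 : the auxiliary sum
  have hB : (∑ k ∈ Icc 1 (n - 1), (-1 : ℚ_[p]) ^ k / (k : ℚ_[p]) ^ 2)
      = P * V - 4 * (-1 : ℚ_[p]) ^ n * A := by
    have hA2 : A = ∑ k ∈ Icc 1 (n - 1),
        (-1 : ℚ_[p]) ^ (n + 1 - k) / (P - 2 * (k : ℚ_[p])) ^ 2 := by
      rw [hA]
      refine Finset.sum_nbij' (fun j => n + 1 - j) (fun k => n + 1 - k) ?_ ?_ ?_ ?_ ?_
      · intro a ha; simp only [mem_Icc] at *; omega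
      · intro a ha; simp only [mem_Icc] at *; omega
      · intro a ha; simp only [mem_Icc] at ha; beta_reduce; omega
      · intro a ha; simp only [mem_Icc] at ha; beta_reduce; omega
      · intro a ha; simp only [mem_Icc] at ha
        have h1 : n + 1 - (n + 1 - a) = a := by omega
        have h2 : P - 2 * (((n + 1 - a : ℕ)) : ℚ_[p]) = 2 * (a : ℚ_[p]) - 1 := by
          rw [Nat.cast_sub (by omega), hpc]; push_cast; ring
        beta_reduce
        rw [h1, h2]
    rw [hA2, hV, Finset.mul_sum, Finset.mul_sum, ← Finset.sum_sub_distrib]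
    refine Finset.sum_congr rfl (fun k hk => ?_)
    have hkm := hk
    rw [mem_Icc] at hkm
    have hsign : (-1 : ℚ_[p]) ^ (n + 1 - k) = (-1) ^ (n + 1) * (-1) ^ k :=
      aux_neg_one_pow_sub _ _ (by omega)
    have hee : (-1 : ℚ_[p]) ^ n * (-1) ^ (n + 1) = -1 := by
      rw [← pow_add]
      exact Odd.neg_one_pow ⟨n, by ring⟩
    have hs3 : (4 : ℚ_[p]) * (-1) ^ n * ((-1) ^ (n + 1 - k) / (P - 2 * (k : ℚ_[p])) ^ 2)
        = -4 * (-1 : ℚ_[p]) ^ k / (P - 2 * (k : ℚ_[p])) ^ 2 := by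
      rw [hsign]
      have hx : (4 : ℚ_[p]) * (-1) ^ n * ((-1) ^ (n + 1) * (-1) ^ k / (P - 2 * (k : ℚ_[p])) ^ 2)
          = 4 * ((-1 : ℚ_[p]) ^ n * (-1) ^ (n + 1)) * (-1) ^ k / (P - 2 * (k : ℚ_[p])) ^ 2 := by
        ring
      rw [hx, hee]
      ring
    rw [hs3]
    have hk0 := hk_ne k hk
    have hw0 := hw_ne k hk
    rw [mul_div_assoc', div_sub_div _ _ (mul_ne_zero (pow_ne_zero 2 hk0) (pow_ne_zero 2 hw0))
        (pow_ne_zero 2 hw0),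
      div_eq_div_iff (pow_ne_zero 2 hk0)
        (mul_ne_zero (mul_ne_zero (pow_ne_zero 2 hk0) (pow_ne_zero 2 hw0)) (pow_ne_zero 2 hw0))]
    ring
  -- Step 3 : assemble
  have hεsq : ((-1 : ℚ_[p]) ^ n) ^ 2 = 1 := by
    rw [← pow_mul, mul_comm, pow_mul]; norm_num
  refine ⟨8 * A + 4 * P * A ^ 2
      + 8 * (-(-1 : ℚ_[p]) ^ n - 2 * P - 2 * P ^ 2 * A) * W + 16 * P ^ 3 * W ^ 2 + V, ?_, ?_⟩
  · -- norm bound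
    have h8 : ‖(8 : ℚ_[p])‖ ≤ 1 := by
      have := aux_norm_nat_le_one (p := p) 8; simpa using this
    have h4 : ‖(4 : ℚ_[p])‖ ≤ 1 := by
      have := aux_norm_nat_le_one (p := p) 4; simpa using this
    have h16 : ‖(16 : ℚ_[p])‖ ≤ 1 := by
      have := aux_norm_nat_le_one (p := p) 16; simpa using this
    have h2 : ‖(2 : ℚ_[p])‖ ≤ 1 := by
      have := aux_norm_nat_le_one (p := p) 2; simpa using this
    have hneg : ∀ x : ℚ_[p], ‖x‖ ≤ 1 → ‖-x‖ ≤ 1 := fun x hx => by rwa [norm_neg]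
    have he : ‖-(-1 : ℚ_[p]) ^ n - 2 * P - 2 * P ^ 2 * A‖ ≤ 1 := by
      refine aux_norm_sub_le_one (aux_norm_sub_le_one (hneg _ hεnorm) ?_) ?_
      · exact aux_norm_mul_le_one h2 hPnorm
      · refine aux_norm_mul_le_one (aux_norm_mul_le_one h2 ?_) hAnorm
        rw [norm_pow]
        exact pow_le_one₀ (norm_nonneg _) hPnorm
    have hP3 : ‖P ^ 3‖ ≤ 1 := by
      rw [norm_pow]; exact pow_le_one₀ (norm_nonneg _) hPnorm
    have hA2n : ‖A ^ 2‖ ≤ 1 := by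
      rw [norm_pow]; exact pow_le_one₀ (norm_nonneg _) hAnorm
    have hW2n : ‖W ^ 2‖ ≤ 1 := by
      rw [norm_pow]; exact pow_le_one₀ (norm_nonneg _) hWnorm
    refine aux_norm_add_le_one (aux_norm_add_le_one (aux_norm_add_le_one (aux_norm_add_le_one
      (aux_norm_mul_le_one h8 hAnorm)
      (aux_norm_mul_le_one (aux_norm_mul_le_one h4 hPnorm) hA2n))
      (aux_norm_mul_le_one (aux_norm_mul_le_one h8 he) hWnorm))
      (aux_norm_mul_le_one (aux_norm_mul_le_one h16 hP3) hW2n)) hVnorm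
  · -- the identity
    linear_combination
      ((∑ i ∈ range p, P * (-1 : ℚ_[p]) ^ i / (2 * (i : ℚ_[p]) - 1))
        + (-(-1 : ℚ_[p]) ^ n - 2 * P - 2 * P ^ 2 * A) + 4 * P ^ 3 * W) * hS
      + P ^ 2 * hB + hεsq

set_option maxHeartbeats 1000000 in
theorem stmt_15 (p : ℕ) (hp : p.Prime) (hodd : Odd p) :
    ∃ a b : ℤ, b ≠ 0 ∧ ¬ (p : ℤ) ∣ b ∧
      ((∑ i ∈ Finset.range p, (p : ℚ) * (-1) ^ i / (2 * (i : ℚ) - 1)) ^ 2 -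
          (1 + 4 * (p : ℚ) * (-1) ^ ((p - 1) / 2) + 4 * (p : ℚ) ^ 2 -
            (p : ℚ) ^ 2 * ∑ k ∈ Finset.Icc 1 ((p - 3) / 2),
              (-1 : ℚ) ^ k / (k : ℚ) ^ 2)) * (b : ℚ) =
        (p : ℚ) ^ 3 * (a : ℚ) := by
  haveI hfp : Fact p.Prime := ⟨hp⟩
  obtain ⟨n, hpn, hn1⟩ : ∃ n, p = 2 * n + 1 ∧ 1 ≤ n := by
    obtain ⟨t, ht⟩ := hodd
    have h2 : 2 ≤ p := hp.two_le
    exact ⟨t, by omega, by omega⟩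
  have he1 : (p - 1) / 2 = n := by omega
  have he2 : (p - 3) / 2 = n - 1 := by omega
  rw [he1, he2]
  obtain ⟨c, hc, hkey⟩ := key_padic p n hpn hn1
  have hp0Q : (p : ℚ) ≠ 0 := Nat.cast_ne_zero.mpr hp.ne_zero
  set D : ℚ := (∑ i ∈ Finset.range p, (p : ℚ) * (-1) ^ i / (2 * (i : ℚ) - 1)) ^ 2 -
      (1 + 4 * (p : ℚ) * (-1) ^ n + 4 * (p : ℚ) ^ 2 -
        (p : ℚ) ^ 2 * ∑ k ∈ Finset.Icc 1 (n - 1), (-1 : ℚ) ^ k / (k : ℚ) ^ 2) with hD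
  have hcast : (D : ℚ_[p]) = (p : ℚ_[p]) ^ 3 * c := by
    rw [hD]
    push_cast
    linear_combination hkey
  set q : ℚ := D / (p : ℚ) ^ 3 with hq
  have hp0K : (p : ℚ_[p]) ≠ 0 := Nat.cast_ne_zero.mpr hp.ne_zero
  have hqc : (q : ℚ_[p]) = c := by
    rw [hq, Rat.cast_div, hcast]
    push_cast
    field_simp
  have hnorm : ‖(q : ℚ_[p])‖ ≤ 1 := by rw [hqc]; exact hc
  have hden : ¬ (p ∣ q.den) := by
    intro hdvd
    have hnum : ¬ ((p : ℤ) ∣ q.num) := by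
      intro hd
      have hc1 : p ∣ q.num.natAbs := by
        have := Int.natAbs_dvd_natAbs.mpr hd
        simpa using this
      have hgcd : p ∣ Nat.gcd q.num.natAbs q.den := Nat.dvd_gcd hc1 hdvd
      rw [q.reduced] at hgcd
      exact hp.one_lt.ne' (Nat.dvd_one.mp hgcd)
    have hden0 : (q.den : ℚ_[p]) ≠ 0 := Nat.cast_ne_zero.mpr q.den_nz
    have hqeq : (q : ℚ_[p]) = (q.num : ℚ_[p]) / (q.den : ℚ_[p]) := Rat.cast_def q
    have h1 : ‖(q.num : ℚ_[p])‖ = 1 := by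
      have hle : ‖(q.num : ℚ_[p])‖ ≤ 1 := Padic.norm_int_le_one _
      have hlt : ¬ ‖(q.num : ℚ_[p])‖ < 1 := by
        rw [Padic.norm_intCast_lt_one_iff]
        exact hnum
      exact le_antisymm hle (not_lt.mp hlt)
    have h2 : ‖(q.den : ℚ_[p])‖ < 1 := by
      have h := (Padic.norm_intCast_lt_one_iff (p := p) (k := (q.den : ℤ))).mpr
        (by exact_mod_cast hdvd)
      push_cast at h
      exact h
    have h2' : (0 : ℝ) < ‖(q.den : ℚ_[p])‖ := norm_pos_iff.mpr hden0
    rw [hqeq, norm_div, h1] at hnorm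
    have h3 : (1 : ℝ) < 1 / ‖(q.den : ℚ_[p])‖ := (one_lt_div h2').mpr h2
    linarith
  refine ⟨q.num, (q.den : ℤ), ?_, ?_, ?_⟩
  · exact_mod_cast q.den_nz
  · exact_mod_cast hden
  · have hden0 : (q.den : ℚ) ≠ 0 := Nat.cast_ne_zero.mpr q.den_nz
    have hqd : q * (q.den : ℚ) = (q.num : ℚ) :=
      ((div_eq_iff hden0).mp (Rat.num_div_den q)).symm
    have hDq : D = (p : ℚ) ^ 3 * q := by
      rw [hq]; field_simp
    push_cast
    rw [hDq, mul_assoc, hqd]
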